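/- For all i, j, k ∈ {1, 2, 3} and every point p ∈ ℝ⁴, g̃_p(R̃(eᵢ, eⱼ)eₖ, e₄) = 0. (Hence any hypersurface of (ℝ⁴, g̃) whose unit normal is e₄ satisfies the vanishing of the normal curvature components required for its second fundamental form to be a Codazzi tensor.) -/

import Mathlib

noncomputable section

/-- The left-invariant frame fields e₁,e₂,e₃,e₄ on ℝ⁴ (coordinates x,y,z,t = p 0,...,p 3). -/
def eVF (i : Fin 4) (p : Fin 4 → ℝ) : Fin 4 → ℝ :=
  ![![1, 0, 0, 0],
    ![p 3, 1, 0, 0],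
    ![(p 3) ^ 2 / 2, p 3, 1, 0],
    ![0, 0, 0, 1]] i

/-- The matrix of the metric g̃ at a point with last coordinate t. -/
def gMat (t : ℝ) : Matrix (Fin 4) (Fin 4) ℝ :=
  !![1, -t, t ^ 2 / 2, 0;
     -t, 1 + t ^ 2, -t * (1 + t ^ 2 / 2), 0;
     t ^ 2 / 2, -t * (1 + t ^ 2 / 2), 1 + t ^ 2 + t ^ 4 / 4, 0;
     0, 0, 0, 1]

/-- The metric g̃ as a bilinear form on each tangent space. -/
def gMet (p X Y : Fin 4 → ℝ) : ℝ :=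
  ∑ i, ∑ j, gMat (p 3) i j * X i * Y j

/-- Partial derivative in direction of the i-th coordinate. -/
def pd (i : Fin 4) (f : (Fin 4 → ℝ) → ℝ) (p : Fin 4 → ℝ) : ℝ :=
  deriv (fun s => f (Function.update p i s)) (p i)

/-- The Christoffel symbols Γᵏᵢⱼ of g̃. -/
def Chr (p : Fin 4 → ℝ) (k i j : Fin 4) : ℝ :=
  (1 / 2) * ∑ l, (gMat (p 3))⁻¹ k l *
    (pd i (fun q => gMat (q 3) j l) p + pd j (fun q => gMat (q 3) i l) p
      - pd l (fun q => gMat (q 3) i j) p)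

/-- The Levi-Civita connection of g̃ in coordinates. -/
def nabla (X Y : (Fin 4 → ℝ) → (Fin 4 → ℝ)) (p : Fin 4 → ℝ) : Fin 4 → ℝ :=
  fun k => (∑ i, X p i * pd i (fun q => Y q k) p)
    + ∑ i, ∑ j, Chr p k i j * X p i * Y p j

/-- Lie bracket of vector fields on ℝ⁴. -/
def bracket (X Y : (Fin 4 → ℝ) → (Fin 4 → ℝ)) (p : Fin 4 → ℝ) : Fin 4 → ℝ :=
  fderiv ℝ Y p (X p) - fderiv ℝ X p (Y p)

/-- The curvature tensor R̃(X,Y)Z = ∇̃_X ∇̃_Y Z − ∇̃_Y ∇̃_X Z − ∇̃_{[X,Y]} Z. -/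
def Riem (X Y Z : (Fin 4 → ℝ) → (Fin 4 → ℝ)) (p : Fin 4 → ℝ) : Fin 4 → ℝ :=
  nabla X (nabla Y Z) p - nabla Y (nabla X Z) p - nabla (bracket X Y) Z p

/-! ### Auxiliary definitions -/

def gInv (t : ℝ) : Matrix (Fin 4) (Fin 4) ℝ :=
  !![1 + t ^ 2 + t ^ 4 / 4, t + t ^ 3 / 2, t ^ 2 / 2, 0;
     t + t ^ 3 / 2, 1 + t ^ 2, t, 0;
     t ^ 2 / 2, t, 1, 0;
     0, 0, 0, 1]

def dG (t : ℝ) : Matrix (Fin 4) (Fin 4) ℝ :=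
  !![0, -1, t, 0;
     -1, 2 * t, -1 - 3 * t ^ 2 / 2, 0;
     t, -1 - 3 * t ^ 2 / 2, 2 * t + t ^ 3, 0;
     0, 0, 0, 0]

def Γm (t : ℝ) : Fin 4 → Matrix (Fin 4) (Fin 4) ℝ :=
  ![!![0, 0, 0, -t / 2;
      0, 0, 0, -1 / 2 + t ^ 2 / 4;
      0, 0, 0, 0;
      -t / 2, -1 / 2 + t ^ 2 / 4, 0, 0],
    !![0, 0, 0, -1 / 2;
      0, 0, 0, 0;
      0, 0, 0, -1 / 2 + t ^ 2 / 4;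
      -1 / 2, 0, -1 / 2 + t ^ 2 / 4, 0],
    !![0, 0, 0, 0;
      0, 0, 0, -1 / 2;
      0, 0, 0, t / 2;
      0, -1 / 2, t / 2, 0],
    !![0, 1 / 2, -t / 2, 0;
      1 / 2, -t, 1 / 2 + 3 * t ^ 2 / 4, 0;
      -t / 2, 1 / 2 + 3 * t ^ 2 / 4, -t - t ^ 3 / 2, 0;
      0, 0, 0, 0]]

def nv (a b : Fin 4) : ℝ :=
  ![![0, 1/2, 0, 0], ![1/2, 0, 1/2, 0], ![0, 1/2, 0, 0], ![0, 0, 0, 0]] a b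

/-! ### The inverse metric -/

lemma gMat_inv (t : ℝ) : (gMat t)⁻¹ = gInv t := by
  apply Matrix.inv_eq_right_inv
  ext i j
  fin_cases i <;> fin_cases j <;>
    simp [gMat, gInv, Matrix.mul_apply, Fin.sum_univ_four] <;> ring

/-! ### Derivatives of the metric entries -/

lemma hasDerivAt_gMat (j l : Fin 4) (x : ℝ) :
    HasDerivAt (fun s => gMat s j l) (dG x j l) x := by
  fin_cases j <;> fin_cases l <;> simp [gMat, dG]
  · exact hasDerivAt_const x 1
  · exact (hasDerivAt_id' (x := x)).neg
  · have := (hasDerivAt_pow 2 x).div_const 2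
    convert this using 1 <;> first | rfl | (push_cast; ring1) | (funext s; push_cast; ring1) | (funext s; simp only [Pi.mul_apply, Pi.neg_apply]; ring1) | (simp only [Pi.neg_apply]; push_cast; ring1)
  · exact hasDerivAt_const x 0
  · exact (hasDerivAt_id' (x := x)).neg
  · have := (hasDerivAt_pow 2 x).const_add 1
    convert (hasDerivAt_pow 2 x) using 1 <;> first | rfl | (push_cast; ring1) | (funext s; push_cast; ring1)
  · have := (hasDerivAt_id' (x := x)).neg.mul (((hasDerivAt_pow 2 x).div_const 2).const_add 1)
    convert this using 1 <;> first | rfl | (push_cast; ring1) | (funext s; push_cast; ring1) | (funext s; simp only [Pi.mul_apply, Pi.neg_apply]; ring1) | (simp only [Pi.neg_apply]; push_cast; ring1)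
  · exact hasDerivAt_const x 0
  · have := (hasDerivAt_pow 2 x).div_const 2
    convert this using 1 <;> first | rfl | (push_cast; ring1) | (funext s; push_cast; ring1) | (funext s; simp only [Pi.mul_apply, Pi.neg_apply]; ring1) | (simp only [Pi.neg_apply]; push_cast; ring1)
  · have := (hasDerivAt_id' (x := x)).neg.mul (((hasDerivAt_pow 2 x).div_const 2).const_add 1)
    convert this using 1 <;> first | rfl | (push_cast; ring1) | (funext s; push_cast; ring1) | (funext s; simp only [Pi.mul_apply, Pi.neg_apply]; ring1) | (simp only [Pi.neg_apply]; push_cast; ring1)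
  · have := ((hasDerivAt_pow 2 x).add ((hasDerivAt_pow 4 x).div_const 4)).const_add 1
    convert this using 1 <;> first | rfl | (push_cast; ring1) | (funext s; push_cast; ring1) | (funext s; simp only [Pi.add_apply]; ring1) | (simp only [Pi.neg_apply]; push_cast; ring1)
  · exact hasDerivAt_const x 0
  · exact hasDerivAt_const x 0
  · exact hasDerivAt_const x 0
  · exact hasDerivAt_const x 0
  · exact hasDerivAt_const x 1

lemma pdg (i j l : Fin 4) (p : Fin 4 → ℝ) :
    pd i (fun q => gMat (q 3) j l) p = if i = 3 then dG (p 3) j l else 0 := by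
  fin_cases i
  · simp [pd, Function.update]
  · simp [pd, Function.update]
  · simp [pd, Function.update]
  · simp only [pd, Function.update]
    norm_num
    exact (hasDerivAt_gMat j l (p 3)).deriv

/-! ### Christoffel symbols in closed form -/

set_option maxHeartbeats 1000000 in
lemma Chr_eq (p : Fin 4 → ℝ) (k i j : Fin 4) : Chr p k i j = Γm (p 3) k i j := by
  simp only [Chr, gMat_inv, Fin.sum_univ_four, pdg]
  fin_cases k <;> fin_cases i <;> fin_cases j <;>
    simp [gInv, dG, Γm, Matrix.vecHead, Matrix.vecTail] <;> ring

/-! ### First covariant derivatives of the frame -/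

lemma nabla_eVF (a b : Fin 4) (ha : a ≠ 3) (hb : b ≠ 3) :
    nabla (eVF a) (eVF b) = fun _ => ![0, 0, 0, nv a b] := by
  funext p k
  fin_cases a <;> first
    | exact absurd rfl ha
    | (fin_cases b <;> first
        | exact absurd rfl hb
        | (fin_cases k <;>
            simp [nabla, Fin.sum_univ_four, Chr_eq, Γm, eVF, nv, pd, Function.update] <;>
            ring))

/-! ### Second covariant derivative, e₄-component -/

lemma nabla_const3 (X : (Fin 4 → ℝ) → Fin 4 → ℝ) (c : ℝ) (hX : ∀ p, X p 3 = 0)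
    (p : Fin 4 → ℝ) : nabla X (fun _ => ![0, 0, 0, c]) p 3 = 0 := by
  simp [nabla, Fin.sum_univ_four, Chr_eq, Γm, hX p, pd]

/-! ### Brackets vanish -/

lemma eVF_last (a : Fin 4) (ha : a ≠ 3) (p : Fin 4 → ℝ) : eVF a p 3 = 0 := by
  fin_cases a <;> first | exact absurd rfl ha | simp [eVF]

lemma fd0 (p v : Fin 4 → ℝ) : fderiv ℝ (eVF 0) p v = 0 := by
  rw [show eVF 0 = fun _ => (![1, 0, 0, 0] : Fin 4 → ℝ) from rfl, fderiv_fun_const]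
  simp

def projL : (Fin 4 → ℝ) →L[ℝ] ℝ :=
  ContinuousLinearMap.proj (R := ℝ) (φ := fun _ : Fin 4 => ℝ) (3 : Fin 4)

lemma fd1 (p v : Fin 4 → ℝ) (hv : v 3 = 0) : fderiv ℝ (eVF 1) p v = 0 := by
  have hg : DifferentiableAt ℝ (fun s : ℝ => (![s, 1, 0, 0] : Fin 4 → ℝ)) (p 3) := by
    rw [differentiableAt_pi]
    intro k; fin_cases k <;> simp <;> fun_prop
  have hf : HasFDerivAt (fun q : Fin 4 → ℝ => q 3) projL p := projL.hasFDerivAt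
  have hc : HasFDerivAt (eVF 1)
      ((fderiv ℝ (fun s : ℝ => (![s, 1, 0, 0] : Fin 4 → ℝ)) (p 3)).comp projL) p :=
    hg.hasFDerivAt.comp (g := fun s : ℝ => (![s, 1, 0, 0] : Fin 4 → ℝ)) p hf
  rw [hc.fderiv]
  have : projL v = 0 := hv
  simp only [ContinuousLinearMap.comp_apply, this]
  exact ContinuousLinearMap.map_zero _

lemma fd2 (p v : Fin 4 → ℝ) (hv : v 3 = 0) : fderiv ℝ (eVF 2) p v = 0 := by
  have hg : DifferentiableAt ℝ (fun s : ℝ => (![s ^ 2 / 2, s, 1, 0] : Fin 4 → ℝ)) (p 3) := by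
    rw [differentiableAt_pi]
    intro k; fin_cases k <;> simp <;> fun_prop
  have hf : HasFDerivAt (fun q : Fin 4 → ℝ => q 3) projL p := projL.hasFDerivAt
  have hc : HasFDerivAt (eVF 2)
      ((fderiv ℝ (fun s : ℝ => (![s ^ 2 / 2, s, 1, 0] : Fin 4 → ℝ)) (p 3)).comp projL) p :=
    hg.hasFDerivAt.comp (g := fun s : ℝ => (![s ^ 2 / 2, s, 1, 0] : Fin 4 → ℝ)) p hf
  rw [hc.fderiv]
  have : projL v = 0 := hv
  simp only [ContinuousLinearMap.comp_apply, this]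
  exact ContinuousLinearMap.map_zero _

lemma fderiv_eVF (a : Fin 4) (ha : a ≠ 3) (p v : Fin 4 → ℝ) (hv : v 3 = 0) :
    fderiv ℝ (eVF a) p v = 0 := by
  fin_cases a
  · exact fd0 p v
  · exact fd1 p v hv
  · exact fd2 p v hv
  · exact absurd rfl ha

lemma bracket_eVF (a b : Fin 4) (ha : a ≠ 3) (hb : b ≠ 3) :
    bracket (eVF a) (eVF b) = fun _ => 0 := by
  funext p
  show fderiv ℝ (eVF b) p (eVF a p) - fderiv ℝ (eVF a) p (eVF b p) = 0
  rw [fderiv_eVF b hb p _ (eVF_last a ha p), fderiv_eVF a ha p _ (eVF_last b hb p), sub_zero]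

lemma nabla_zero (Z : (Fin 4 → ℝ) → Fin 4 → ℝ) (p : Fin 4 → ℝ) :
    nabla (fun _ => 0) Z p = 0 := by
  funext k
  simp [nabla]

/-! ### Main lemma -/

lemma main2 (p : Fin 4 → ℝ) (a b c : Fin 4) (ha : a ≠ 3) (hb : b ≠ 3) (hc : c ≠ 3) :
    gMet p (Riem (eVF a) (eVF b) (eVF c) p) (eVF 3 p) = 0 := by
  have hX : ∀ (d : Fin 4), d ≠ 3 → ∀ q, eVF d q 3 = 0 := fun d hd q => eVF_last d hd q
  have hR : Riem (eVF a) (eVF b) (eVF c) p 3 = 0 := by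
    simp only [Riem, Pi.sub_apply, bracket_eVF a b ha hb, nabla_eVF b c hb hc,
      nabla_eVF a c ha hc, nabla_zero]
    rw [nabla_const3 (eVF a) _ (hX a ha) p, nabla_const3 (eVF b) _ (hX b hb) p]
    simp
  simp [gMet, Fin.sum_univ_four, gMat, eVF, hR]

/-- For all i,j,k ∈ {1,2,3}, g̃(R̃(eᵢ,eⱼ)eₖ, e₄) = 0. -/
theorem nil4_codazzi_for_e4 :
    ∀ (p : Fin 4 → ℝ) (i j k : Fin 3),
      gMet p (Riem (eVF i.castSucc) (eVF j.castSucc) (eVF k.castSucc) p)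
        (eVF 3 p) = 0 := by
  intro p i j k
  have h : ∀ m : Fin 3, m.castSucc ≠ (3 : Fin 4) := by decide
  exact main2 p _ _ _ (h i) (h j) (h k)
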